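/- Let S be a 2-orthogonal collection in 𝒞. Then every morphism α: a^0 → a^1 in the extension closure ⟨S⟩ can be factorised as a^0 →^{σ} a →^{ι} a^1 with a ∈ ⟨S⟩, where σ is a deflation (there exists a short triangle x → a^0 →^{σ} a with x ∈ ⟨S⟩) and ι is a categorical monomorphism in ⟨S⟩ (𝒞(b, ι) is injective for every b ∈ ⟨S⟩). -/

import Mathlib

/-!
Common setup: `k` is a field, `C` an essentially small `k`-linear Hom-finite
triangulated category with split idempotents; `Σ` (suspension) is the shift by `1`.
-/

open CategoryTheory CategoryTheory.Limits CategoryTheory.Pretriangulated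

universe v u

variable {C : Type u} [Category.{v} C] [Preadditive C] [HasZeroObject C]
  [HasShift C ℤ] [∀ n : ℤ, (shiftFunctor C n).Additive] [Pretriangulated C]
  [HasBinaryBiproducts C]

/-- `c' ⟶ c ⟶ c''` is a *short triangle* if it fits into a distinguished triangle
`c' ⟶ c ⟶ c'' ⟶ Σ c'`. -/
def ShortTri {a b c : C} (f : a ⟶ b) (g : b ⟶ c) : Prop :=
  ∃ h : c ⟶ a⟦(1 : ℤ)⟧, Triangle.mk f g h ∈ distTriang C

/-- The extension closure `⟨S⟩` of a set of objects `S`: the smallest full subcategory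
(i.e. predicate on objects) containing `S` and closed under isomorphisms, finite direct
sums and extensions. -/
inductive ExtClos (S : Set C) : C → Prop
  | of {s : C} (hs : s ∈ S) : ExtClos S s
  | zero {z : C} (hz : IsZero z) : ExtClos S z
  | sum {x y : C} (hx : ExtClos S x) (hy : ExtClos S y) : ExtClos S (x ⊞ y)
  | iso {x y : C} (e : x ≅ y) (hx : ExtClos S x) : ExtClos S y
  | ext {a e b : C} (f : a ⟶ e) (g : e ⟶ b) (hT : ShortTri f g)
      (ha : ExtClos S a) (hb : ExtClos S b) : ExtClos S e

/-- A *`w`-orthogonal collection*: a finite set `S` of objects such that each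
`End(s)` is a skew field, `Hom(s,t) = 0` for distinct `s t ∈ S`, and
`Hom(s, Σ^ℓ t) = 0` for `ℓ ∈ {-w+1, …, -1}`. -/
structure IsOrthogonalCollection (w : ℤ) (S : Set C) : Prop where
  finite : S.Finite
  id_ne_zero : ∀ s ∈ S, (𝟙 s : s ⟶ s) ≠ 0
  isIso_of_ne_zero : ∀ s ∈ S, ∀ f : s ⟶ s, f ≠ 0 → IsIso f
  hom_eq_zero : ∀ s ∈ S, ∀ t ∈ S, s ≠ t → ∀ f : s ⟶ t, f = 0
  shift_hom_eq_zero : ∀ s ∈ S, ∀ t ∈ S, ∀ ℓ : ℤ, 1 - w ≤ ℓ → ℓ ≤ -1 → ∀ f : s ⟶ t⟦ℓ⟧, f = 0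

/-- `(f, g)` is a kernel–cokernel pair: `f` is a kernel of `g` and `g` is a cokernel
of `f`.  In an abelian category these are exactly the short exact sequences. -/
def IsKernelCokernelPair {A : Type*} [Category A] [Limits.HasZeroMorphisms A]
    {x y z : A} (f : x ⟶ y) (g : y ⟶ z) : Prop :=
  ∃ w : f ≫ g = 0, Nonempty (IsLimit (KernelFork.ofι f w)) ∧
    Nonempty (IsColimit (CokernelCofork.ofπ g w))

/-- An additive subcategory (as a predicate on objects): closed under isomorphisms,
finite direct sums and direct summands. -/
structure IsAdditiveSubcat (P : C → Prop) : Prop where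
  iso_closed : ∀ {x y : C}, (x ≅ y) → P x → P y
  sum_closed : ∀ {x y : C}, P x → P y → P (x ⊞ y)
  summand_closed : ∀ {x y : C}, P (x ⊞ y) → P x ∧ P y

/-- `P` is a *proper abelian subcategory* of `C`: an additive subcategory which is
abelian and whose short exact sequences (= kernel–cokernel pairs) are precisely the
short triangles of `C` with all terms in `P`. -/
structure IsProperAbelianSub (P : C → Prop) : Prop where
  additive : IsAdditiveSubcat P
  abelian : Nonempty (Abelian (ObjectProperty.FullSubcategory P))
  ses_iff_shortTri : ∀ (x y z : ObjectProperty.FullSubcategory P) (f : x ⟶ y) (g : y ⟶ z),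
    IsKernelCokernelPair f g ↔ ShortTri f.hom g.hom

/-- Finite length object in a category with zero morphisms: built from the zero object
by finitely many short exact sequences (kernel–cokernel pairs) with simple top. -/
inductive IsFinLength {A : Type*} [Category A] [Limits.HasZeroMorphisms A] : A → Prop
  | of_isZero {x : A} (h : IsZero x) : IsFinLength x
  | step {a x s : A} (f : a ⟶ x) (g : x ⟶ s) (hs : Simple s)
      (hkc : IsKernelCokernelPair f g) (ha : IsFinLength a) : IsFinLength x

/-- An `X`-preenvelope of `c`. -/
def IsPreenvelope (X : C → Prop) {c e : C} (γ : c ⟶ e) : Prop :=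
  X e ∧ ∀ e' : C, X e' → ∀ f : c ⟶ e', ∃ φ : e ⟶ e', γ ≫ φ = f

/-- An `X`-envelope of `c`: a left minimal `X`-preenvelope. -/
def IsEnvelope (X : C → Prop) {c e : C} (γ : c ⟶ e) : Prop :=
  IsPreenvelope X γ ∧ ∀ φ : e ⟶ e, γ ≫ φ = γ → IsIso φ

/-- An `X`-precover of `c`. -/
def IsPrecover (X : C → Prop) {x c : C} (τ : x ⟶ c) : Prop :=
  X x ∧ ∀ x' : C, X x' → ∀ f : x' ⟶ c, ∃ φ : x' ⟶ x, φ ≫ τ = f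

/-- An `X`-cover of `c`: a right minimal `X`-precover. -/
def IsCover (X : C → Prop) {x c : C} (τ : x ⟶ c) : Prop :=
  IsPrecover X τ ∧ ∀ φ : x ⟶ x, φ ≫ τ = τ → IsIso φ

/-- `Σ^n P`: the closure under isomorphism of the image of `P` under the `n`-th shift. -/
def ShiftClos (n : ℤ) (P : C → Prop) : C → Prop :=
  fun y => ∃ x : C, P x ∧ Nonempty (y ≅ x⟦n⟧)

/-- The star product `P * Q` of two classes of objects. -/
def StarProd (P Q : C → Prop) : C → Prop :=
  fun e => ∃ (a b : C) (f : a ⟶ e) (g : e ⟶ b), P a ∧ Q b ∧ ShortTri f g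

/-- `SpanFiltration S n = ⟨S⟩ * Σ^{-1}⟨S⟩ * ⋯ * Σ^{-n}⟨S⟩`. -/
def SpanFiltration (S : Set C) : ℕ → C → Prop
  | 0 => ExtClos S
  | n + 1 => StarProd (SpanFiltration S n) (ShiftClos (-(n + 1 : ℤ)) (ExtClos S))

/-- A *`w`-simple minded system*: a `w`-orthogonal collection `S` with
`C = ⟨S⟩ * Σ^{-1}⟨S⟩ * ⋯ * Σ^{-w+1}⟨S⟩`. -/
def IsSimpleMindedSystem (w : ℕ) (S : Set C) : Prop :=
  IsOrthogonalCollection (w : ℤ) S ∧ ∀ c : C, SpanFiltration S (w - 1) c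

/-- A torsion pair `(T, F)` in the (proper abelian) subcategory given by `P`;
short exact sequences in `P` are the short triangles with all terms in `P`. -/
structure IsTorsionPair (P T F : C → Prop) : Prop where
  t_sub : ∀ x, T x → P x
  f_sub : ∀ x, F x → P x
  t_iso : ∀ {x y : C}, (x ≅ y) → T x → T y
  f_iso : ∀ {x y : C}, (x ≅ y) → F x → F y
  hom_zero : ∀ t f, T t → F f → ∀ φ : t ⟶ f, φ = 0
  exists_seq : ∀ a, P a → ∃ (t f : C) (i : t ⟶ a) (p : a ⟶ f), T t ∧ F f ∧ ShortTri i p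

/-- `T` is closed under subobjects in the subcategory given by `P`. -/
def ClosedUnderSubobjects (P T : C → Prop) : Prop :=
  ∀ (x y : ObjectProperty.FullSubcategory P) (f : x ⟶ y), Mono f → T y.obj → T x.obj

/-- `T` is closed under quotient objects in the subcategory given by `P`. -/
def ClosedUnderQuotients (P T : C → Prop) : Prop :=
  ∀ (x y : ObjectProperty.FullSubcategory P) (f : x ⟶ y), Epi f → T x.obj → T y.obj

/-- `t` is a left tilt of `s` at `S'`: `t = Σ^{-1} s` for `s ∈ S'`, and otherwise `t` is
the cone of a `(Σ^{-1}⟨S'⟩)`-cover `τ : Σ^{-1}t_s ⟶ s`. -/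
def LeftTiltPair (S' : Set C) (s t : C) : Prop :=
  (s ∈ S' ∧ t = s⟦(-1 : ℤ)⟧) ∨
  (s ∉ S' ∧ ∃ (u : C) (τ : u ⟶ s) (g : s ⟶ t) (h : t ⟶ u⟦(1 : ℤ)⟧),
      IsCover (ShiftClos (-1) (ExtClos S')) τ ∧ Triangle.mk τ g h ∈ distTriang C)

/-- `L` realises the left tilt `L_{S'}(S)` of `S` at `S' ⊆ S`. -/
def IsLeftTilt (S' S : Set C) (L : C → C) : Prop := ∀ s ∈ S, LeftTiltPair S' s (L s)

/-- `t` is a right tilt of `s` at `S''`: `t = Σ s` for `s ∈ S''`, and otherwise there is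
a distinguished triangle `g_s ⟶ t ⟶ s ⟶ Σ g_s` whose third map is a `(Σ⟨S''⟩)`-envelope. -/
def RightTiltPair (S'' : Set C) (s t : C) : Prop :=
  (s ∈ S'' ∧ t = s⟦(1 : ℤ)⟧) ∨
  (s ∉ S'' ∧ ∃ (g : C) (a : g ⟶ t) (b : t ⟶ s) (γ : s ⟶ g⟦(1 : ℤ)⟧),
      IsEnvelope (ShiftClos 1 (ExtClos S'')) γ ∧ Triangle.mk a b γ ∈ distTriang C)

/-- `R` realises the right tilt `R_{S''}(S)` of `S` at `S'' ⊆ S`. -/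
def IsRightTilt (S'' S : Set C) (R : C → C) : Prop := ∀ s ∈ S, RightTiltPair S'' s (R s)

/-- `C` is `(-w)`-Calabi--Yau: `Σ^{-w}` is a Serre functor, i.e. there are isomorphisms
`C(x, Σ^{-w} y) ≅ D C(y, x)` natural in `x` and `y`. -/
def IsNegativeCalabiYau (k : Type) [Field k] (C : Type u) [Category.{v} C] [Preadditive C]
    [Linear k C] [HasShift C ℤ] (w : ℤ) : Prop :=
  ∃ η : ∀ x y : C, (x ⟶ y⟦(-w : ℤ)⟧) ≃ₗ[k] ((y ⟶ x) →ₗ[k] k),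
    (∀ (x x' y : C) (f : x ⟶ x') (α : x' ⟶ y⟦(-w : ℤ)⟧) (g : y ⟶ x),
      η x y (f ≫ α) g = η x' y α (g ≫ f)) ∧
    (∀ (x y y' : C) (u : y ⟶ y') (α : x ⟶ y⟦(-w : ℤ)⟧) (g : y' ⟶ x),
      η x y' (α ≫ (shiftFunctor C (-w : ℤ)).map u) g = η x y α (u ≫ g))

set_option linter.unusedSectionVars false

open ZeroObject

section VanLemmas

variable {S : Set C}

/-- Vanishing of maps out of `⟨S⟩` into a fixed object propagates from `S`. -/
private lemma extClos_hom_zero_left {X : C} (hS0 : ∀ s, s ∈ S → ∀ f : s ⟶ X, f = 0) :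
    ∀ b, ExtClos S b → ∀ f : b ⟶ X, f = 0 := by
  intro b hb
  induction hb with
  | of hs => exact hS0 _ hs
  | zero hz => exact fun f => hz.eq_of_src f 0
  | sum hx hy ihx ihy =>
      intro f
      obtain ⟨g, hg⟩ := Triangle.yoneda_exact₂ _
        (binaryBiproductTriangle_distinguished _ _) f (ihx _)
      rw [hg, show g = 0 from ihy g]
      exact comp_zero
  | iso e hx ih =>
      intro f
      have : e.hom ≫ f = 0 := ih _
      rw [← Category.id_comp f, ← e.inv_hom_id, Category.assoc, this, comp_zero]
  | ext f' g' hT ha hb iha ihb =>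
      intro φ
      obtain ⟨h, hd⟩ := hT
      obtain ⟨g, hg⟩ := Triangle.yoneda_exact₂ _ hd φ (iha _)
      rw [hg, show g = 0 from ihb g]
      exact comp_zero

/-- Vanishing of maps from a fixed simple into `Σ⁻¹⟨S⟩` propagates. -/
private lemma van_simple_right (hS : IsOrthogonalCollection 2 S) {s : C} (hs : s ∈ S) :
    ∀ y, ExtClos S y → ∀ f : s ⟶ y⟦(-1 : ℤ)⟧, f = 0 := by
  intro y hy
  induction hy with
  | of ht => exact hS.shift_hom_eq_zero s hs _ ht (-1) (by norm_num) (by norm_num)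
  | zero hz =>
      exact fun f => ((shiftFunctor C (-1 : ℤ)).map_isZero hz).eq_of_tgt f 0
  | sum hx hy ihx ihy =>
      rename_i x y
      intro f
      have hTsh : (Triangle.shiftFunctor C (-1 : ℤ)).obj (binaryBiproductTriangle x y) ∈
          distTriang C := Triangle.shift_distinguished _
        (binaryBiproductTriangle_distinguished x y) (-1)
      obtain ⟨g, hg⟩ := Triangle.coyoneda_exact₂ _ hTsh f (by
        show f ≫ ((-1 : ℤ).negOnePow • (shiftFunctor C (-1 : ℤ)).map biprod.snd) = 0
        rw [Linear.comp_units_smul, ihy (f ≫ (shiftFunctor C (-1 : ℤ)).map biprod.snd),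
          smul_zero])
      rw [hg]
      have : (g : s ⟶ x⟦(-1 : ℤ)⟧) = 0 := ihx g
      rw [this]
      exact zero_comp
  | iso e hx ih =>
      intro f
      have h1 : f ≫ (shiftFunctor C (-1 : ℤ)).map e.inv = 0 := ih _
      have : f = (f ≫ (shiftFunctor C (-1 : ℤ)).map e.inv) ≫
          (shiftFunctor C (-1 : ℤ)).map e.hom := by
        rw [Category.assoc, ← Functor.map_comp, e.inv_hom_id,
          CategoryTheory.Functor.map_id, Category.comp_id]
      rw [this, h1, zero_comp]
  | ext f' g' hT ha hb iha ihb =>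
      intro φ
      rename_i a eo b
      obtain ⟨h, hd⟩ := hT
      have hTsh : (Triangle.shiftFunctor C (-1 : ℤ)).obj (Triangle.mk f' g' h) ∈
          distTriang C := Triangle.shift_distinguished _ hd (-1)
      obtain ⟨g, hg⟩ := Triangle.coyoneda_exact₂ _ hTsh φ (by
        show φ ≫ ((-1 : ℤ).negOnePow • (shiftFunctor C (-1 : ℤ)).map g') = 0
        rw [Linear.comp_units_smul, ihb (φ ≫ (shiftFunctor C (-1 : ℤ)).map g'), smul_zero])
      rw [hg]
      have : (g : s ⟶ a⟦(-1 : ℤ)⟧) = 0 := iha g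
      rw [this]
      exact zero_comp

end VanLemmas

section Van2
variable {S : Set C}

private lemma van (hS : IsOrthogonalCollection 2 S) :
    ∀ x, ExtClos S x → ∀ y, ExtClos S y → ∀ f : x ⟶ y⟦(-1 : ℤ)⟧, f = 0 := by
  intro x hx y hy
  exact extClos_hom_zero_left (fun s hs f => van_simple_right hS hs y hy f) x hx

end Van2



section BasicKill

private lemma kill_mor₁ (T : Triangle C) (hT : T ∈ distTriang C) {X : C} (f : X ⟶ T.obj₁)
    (hf : f ≫ T.mor₁ = 0) (hvan : ∀ g : X ⟶ T.obj₃⟦(-1 : ℤ)⟧, g = 0) : f = 0 := by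
  obtain ⟨g, hg⟩ := Triangle.coyoneda_exact₂ _ (inv_rot_of_distTriang _ hT) f hf
  rw [hg, show g = 0 from hvan g]
  exact zero_comp

private lemma kill_yoneda₃ (T : Triangle C) (hT : T ∈ distTriang C) {X : C} (f : T.obj₃ ⟶ X)
    (hf : T.mor₂ ≫ f = 0) (hvan : ∀ g : T.obj₁⟦(1 : ℤ)⟧ ⟶ X, g = 0) : f = 0 := by
  obtain ⟨g, hg⟩ := Triangle.yoneda_exact₃ _ hT f hf
  rw [hg, show g = 0 from hvan g]
  exact comp_zero

private lemma shift_kill {x y : C} (h : ∀ f : x ⟶ y⟦(-1 : ℤ)⟧, f = 0) :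
    ∀ f : x⟦(1 : ℤ)⟧ ⟶ y, f = 0 := by
  intro f
  have h3 : (shiftFunctor C (-1 : ℤ)).map f = 0 := by
    rw [← cancel_epi ((shiftFunctorCompIsoId C (1 : ℤ) (-1) (by norm_num)).inv.app x :
      x ⟶ (x⟦(1 : ℤ)⟧)⟦(-1 : ℤ)⟧), comp_zero]
    exact h _
  exact (shiftFunctor C (-1 : ℤ)).map_injective (by rw [h3, Functor.map_zero])

end BasicKill

section Wrappers

variable {X Y Z W : C}

private lemma yon₂ {f : X ⟶ Y} {g : Y ⟶ Z} {h : Z ⟶ X⟦(1 : ℤ)⟧}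
    (hT : Triangle.mk f g h ∈ distTriang C) (φ : Y ⟶ W) (hφ : f ≫ φ = 0) :
    ∃ ψ : Z ⟶ W, φ = g ≫ ψ :=
  Triangle.yoneda_exact₂ _ hT φ hφ

private lemma yon₃ {f : X ⟶ Y} {g : Y ⟶ Z} {h : Z ⟶ X⟦(1 : ℤ)⟧}
    (hT : Triangle.mk f g h ∈ distTriang C) (φ : Z ⟶ W) (hφ : g ≫ φ = 0) :
    ∃ ψ : X⟦(1 : ℤ)⟧ ⟶ W, φ = h ≫ ψ :=
  Triangle.yoneda_exact₃ _ hT φ hφ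

private lemma coyon₂ {f : X ⟶ Y} {g : Y ⟶ Z} {h : Z ⟶ X⟦(1 : ℤ)⟧}
    (hT : Triangle.mk f g h ∈ distTriang C) (φ : W ⟶ Y) (hφ : φ ≫ g = 0) :
    ∃ ψ : W ⟶ X, φ = ψ ≫ f :=
  Triangle.coyoneda_exact₂ _ hT φ hφ

private lemma coyon₃ {f : X ⟶ Y} {g : Y ⟶ Z} {h : Z ⟶ X⟦(1 : ℤ)⟧}
    (hT : Triangle.mk f g h ∈ distTriang C) (φ : W ⟶ Z) (hφ : φ ≫ h = 0) :
    ∃ ψ : W ⟶ Y, φ = ψ ≫ g :=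
  Triangle.coyoneda_exact₃ _ hT φ hφ

private lemma killmor₁ {f : X ⟶ Y} {g : Y ⟶ Z} {h : Z ⟶ X⟦(1 : ℤ)⟧}
    (hT : Triangle.mk f g h ∈ distTriang C) (φ : W ⟶ X) (hφ : φ ≫ f = 0)
    (hvan : ∀ ψ : W ⟶ Z⟦(-1 : ℤ)⟧, ψ = 0) : φ = 0 :=
  kill_mor₁ _ hT φ hφ hvan

private lemma killyon₃ {f : X ⟶ Y} {g : Y ⟶ Z} {h : Z ⟶ X⟦(1 : ℤ)⟧}
    (hT : Triangle.mk f g h ∈ distTriang C) (φ : Z ⟶ W) (hφ : g ≫ φ = 0)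
    (hvan : ∀ ψ : X⟦(1 : ℤ)⟧ ⟶ W, ψ = 0) : φ = 0 :=
  kill_yoneda₃ _ hT φ hφ hvan

private lemma zero₁₂ {f : X ⟶ Y} {g : Y ⟶ Z} {h : Z ⟶ X⟦(1 : ℤ)⟧}
    (hT : Triangle.mk f g h ∈ distTriang C) : f ≫ g = 0 :=
  comp_distTriang_mor_zero₁₂ _ hT

private lemma zero₂₃ {f : X ⟶ Y} {g : Y ⟶ Z} {h : Z ⟶ X⟦(1 : ℤ)⟧}
    (hT : Triangle.mk f g h ∈ distTriang C) : g ≫ h = 0 :=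
  comp_distTriang_mor_zero₂₃ _ hT

private lemma zero₃₁ {f : X ⟶ Y} {g : Y ⟶ Z} {h : Z ⟶ X⟦(1 : ℤ)⟧}
    (hT : Triangle.mk f g h ∈ distTriang C) : h ≫ f⟦(1 : ℤ)⟧' = 0 :=
  comp_distTriang_mor_zero₃₁ _ hT

private lemma cdt₂ {X₁ Y₁ Z₁ X₂ Y₂ Z₂ : C} {f₁ : X₁ ⟶ Y₁} {g₁ : Y₁ ⟶ Z₁}
    {h₁ : Z₁ ⟶ X₁⟦(1 : ℤ)⟧} {f₂ : X₂ ⟶ Y₂} {g₂ : Y₂ ⟶ Z₂} {h₂ : Z₂ ⟶ X₂⟦(1 : ℤ)⟧}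
    (hT₁ : Triangle.mk f₁ g₁ h₁ ∈ distTriang C) (hT₂ : Triangle.mk f₂ g₂ h₂ ∈ distTriang C)
    (a : X₁ ⟶ X₂) (c : Z₁ ⟶ Z₂) (comm : h₁ ≫ a⟦(1 : ℤ)⟧' = c ≫ h₂) :
    ∃ b : Y₁ ⟶ Y₂, f₁ ≫ b = a ≫ f₂ ∧ g₁ ≫ c = b ≫ g₂ :=
  complete_distinguished_triangle_morphism₂ _ _ hT₁ hT₂ a c comm

end Wrappers

section KeyLemma

/-- **KEY lemma** (cone of a glued map): given a two-step tower on `A` and a compatibly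
glued extension `e`, there is a map `ι : e ⟶ A` whose cone is the second-stage quotient. -/
private lemma key_lemma {m A n m'' n₂ e : C}
    (ι' : m ⟶ A) (π' : A ⟶ n) (h₂ : n ⟶ m⟦(1 : ℤ)⟧)
    (hTm : Triangle.mk ι' π' h₂ ∈ distTriang C)
    (ι'' : m'' ⟶ n) (π'' : n ⟶ n₂) (h₄ : n₂ ⟶ m''⟦(1 : ℤ)⟧)
    (hT'' : Triangle.mk ι'' π'' h₄ ∈ distTriang C)
    (j : m ⟶ e) (t : e ⟶ m'')
    (hTe : Triangle.mk j t (ι'' ≫ h₂) ∈ distTriang C)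
    (hV1 : ∀ f : e ⟶ n⟦(-1 : ℤ)⟧, f = 0)
    (hV2 : ∀ f : e ⟶ n₂⟦(-1 : ℤ)⟧, f = 0)
    (hV4 : ∀ f : m''⟦(1 : ℤ)⟧ ⟶ n₂, f = 0)
    (hH3 : ∀ g : m⟦(1 : ℤ)⟧ ⟶ n₂, ι'' ≫ h₂ ≫ g = 0 → h₂ ≫ g = 0) :
    ∃ (ι : e ⟶ A) (h' : n₂ ⟶ e⟦(1 : ℤ)⟧),
      j ≫ ι = ι' ∧ ι ≫ π' = t ≫ ι'' ∧
      Triangle.mk ι (π' ≫ π'') h' ∈ distTriang C := by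
  -- construct ι
  obtain ⟨ι, hι₁, hι₂⟩ := cdt₂ hTe hTm (𝟙 m) ι''
    (by rw [CategoryTheory.Functor.map_id, Category.comp_id])
  rw [Category.id_comp] at hι₁
  -- hι₁ : j ≫ ι = ι',  hι₂ : t ≫ ι'' = ι ≫ π'
  obtain ⟨N, q, hN, hG⟩ := distinguished_cocone_triangle ι
  have hιq : ι ≫ q = 0 := zero₁₂ hG
  obtain ⟨qb, hqb⟩ := yon₂ hTm q (by rw [← hι₁, Category.assoc, hιq, comp_zero])
  obtain ⟨g₀, hg₀⟩ := yon₃ hTe (ι'' ≫ qb)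
    (by rw [← Category.assoc, hι₂, Category.assoc, ← hqb, hιq])
  set qb' : n ⟶ N := qb - h₂ ≫ g₀ with hqb'def
  have hπqb' : π' ≫ qb' = q := by
    rw [hqb'def, Preadditive.comp_sub, ← hqb, ← Category.assoc, zero₂₃ hTm,
      zero_comp, sub_zero]
  have hιqb' : ι'' ≫ qb' = 0 := by
    rw [hqb'def, Preadditive.comp_sub, hg₀, Category.assoc, sub_self]
  obtain ⟨u, hu⟩ := yon₂ hT'' qb' hιqb'
  have hρu : (π' ≫ π'') ≫ u = q := by rw [Category.assoc, ← hu, hπqb']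
  obtain ⟨v, hv⟩ := yon₂ hG (π' ≫ π'') (by
    rw [← Category.assoc, ← hι₂, Category.assoc, zero₁₂ hT'', comp_zero])
  -- u ≫ v = 𝟙 n₂
  have huv : u ≫ v = 𝟙 n₂ := by
    have h8 : π' ≫ (π'' ≫ u ≫ v - π'') = 0 := by
      rw [Preadditive.comp_sub]
      simp only [← Category.assoc]
      rw [hρu, ← hv, sub_self]
    obtain ⟨g₂, hg₂⟩ := yon₃ hTm (π'' ≫ u ≫ v - π'') h8
    have hg₂0 : h₂ ≫ g₂ = 0 := by
      apply hH3
      have h12 : ι'' ≫ (π'' ≫ u ≫ v - π'') = 0 := by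
        rw [Preadditive.comp_sub]
        simp only [← Category.assoc]
        rw [zero₁₂ hT'']
        simp
      rw [← hg₂]
      exact h12
    have h9 : π'' ≫ u ≫ v = π'' := by
      have h13 := hg₂
      rw [hg₂0] at h13
      exact sub_eq_zero.mp h13
    obtain ⟨g₄, hg₄⟩ := yon₃ hT'' (u ≫ v - 𝟙 n₂) (by
      rw [Preadditive.comp_sub, Category.comp_id, h9, sub_self])
    rw [hV4 g₄, comp_zero] at hg₄
    exact sub_eq_zero.mp hg₄
  -- v ≫ u = 𝟙 N
  obtain ⟨g, hg⟩ := yon₃ hG (v ≫ u - 𝟙 N) (by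
    rw [Preadditive.comp_sub, Category.comp_id, ← Category.assoc, ← hv, hρu, sub_self])
  have hφι : (g ≫ hN) ≫ (shiftFunctor C (1 : ℤ)).map ι = 0 := by
    rw [Category.assoc, zero₃₁ hG, comp_zero]
  set φ₀ : e ⟶ e := (shiftFunctor C (1 : ℤ)).preimage (g ≫ hN) with hφ₀def
  have hφ₀ι : φ₀ ≫ ι = 0 := by
    apply (shiftFunctor C (1 : ℤ)).map_injective
    rw [Functor.map_comp, hφ₀def, Functor.map_preimage, Functor.map_zero]
    exact hφι
  have h10 : (φ₀ ≫ t) ≫ ι'' = 0 := by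
    rw [Category.assoc, hι₂, ← Category.assoc, hφ₀ι, zero_comp]
  have h11 : φ₀ ≫ t = 0 := killmor₁ hT'' (φ₀ ≫ t) h10 hV2
  obtain ⟨ξ, hξ⟩ := coyon₂ hTe φ₀ h11
  have hξ0 : ξ = 0 := by
    refine killmor₁ hTm ξ ?_ hV1
    rw [← hι₁, ← Category.assoc, ← hξ, hφ₀ι]
  have hφ : g ≫ hN = 0 := by
    have hφ₀0 : φ₀ = 0 := by rw [hξ, hξ0, zero_comp]
    have h14 := (shiftFunctor C (1 : ℤ)).map_preimage (g ≫ hN)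
    rw [← h14, ← hφ₀def, hφ₀0, Functor.map_zero]
  have hvu : v ≫ u = 𝟙 N := by
    have hsq : (v ≫ u - 𝟙 N) ≫ (v ≫ u - 𝟙 N) = -(v ≫ u - 𝟙 N) := by
      have haa : (v ≫ u) ≫ (v ≫ u) = v ≫ u := by
        rw [show (v ≫ u) ≫ v ≫ u = v ≫ (u ≫ v) ≫ u by simp only [Category.assoc], huv,
          Category.id_comp]
      simp only [Preadditive.sub_comp, Preadditive.comp_sub, Category.comp_id,
        Category.id_comp, haa]
      abel
    have hz : (v ≫ u - 𝟙 N) ≫ (v ≫ u - 𝟙 N) = 0 := by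
      rw [hg, Category.assoc, ← Category.assoc g hN g, hφ, zero_comp, comp_zero]
    rw [hz] at hsq
    exact sub_eq_zero.mp (neg_eq_zero.mp hsq.symm)
  -- transport the triangle along the isomorphism v
  have hIsoV : IsIso v := ⟨u, hvu, huv⟩
  have hiso : Triangle.mk ι q hN ≅ Triangle.mk ι (π' ≫ π'') (u ≫ hN) := by
    refine Triangle.isoMk _ _ (Iso.refl e) (Iso.refl A) (@asIso _ _ _ _ v hIsoV)
      ((Category.comp_id _).trans (Category.id_comp _).symm) ?_ ?_
    · exact ((Category.id_comp _).trans hv).symm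
    · exact ((congrArg (hN ≫ ·) ((shiftFunctor C (1 : ℤ)).map_id e)).trans
        (Category.comp_id hN)).trans ((Category.id_comp hN).symm.trans
        ((congrArg (· ≫ hN) hvu).symm.trans (Category.assoc v u hN)))
  exact ⟨ι, u ≫ hN, hι₁, hι₂.symm, isomorphic_distinguished _ hG _ hiso.symm⟩

end KeyLemma

section FibHelpers

/-- The canonical map `Z⟦-1⟧ ⟶ X` induced by a triangle `(X, Y, Z)`. -/
private def fibMor {X Y Z : C} (f : X ⟶ Y) (g : Y ⟶ Z) (h : Z ⟶ X⟦(1 : ℤ)⟧) :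
    Z⟦(-1 : ℤ)⟧ ⟶ X :=
  (Triangle.mk f g h).invRotate.mor₁

private lemma coyon_fib {X Y Z W : C} {f : X ⟶ Y} {g : Y ⟶ Z} {h : Z ⟶ X⟦(1 : ℤ)⟧}
    (hT : Triangle.mk f g h ∈ distTriang C) (φ : W ⟶ X) (hφ : φ ≫ f = 0) :
    ∃ ψ : W ⟶ Z⟦(-1 : ℤ)⟧, φ = ψ ≫ fibMor f g h :=
  Triangle.coyoneda_exact₂ _ (inv_rot_of_distTriang _ hT) φ hφ

private lemma fibMor_comp {X Y Z : C} {f : X ⟶ Y} {g : Y ⟶ Z} {h : Z ⟶ X⟦(1 : ℤ)⟧}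
    (hT : Triangle.mk f g h ∈ distTriang C) : fibMor f g h ≫ f = 0 :=
  comp_distTriang_mor_zero₁₂ _ (inv_rot_of_distTriang _ hT)

private lemma comp_fibMor_zero {X Y Z : C} {f : X ⟶ Y} {g : Y ⟶ Z} {h : Z ⟶ X⟦(1 : ℤ)⟧}
    (hT : Triangle.mk f g h ∈ distTriang C) :
    g⟦(-1 : ℤ)⟧' ≫ fibMor f g h = 0 := by
  change g⟦(-1 : ℤ)⟧' ≫ (-h⟦(-1 : ℤ)⟧' ≫ (shiftEquiv C (1 : ℤ)).unitIso.inv.app X) = 0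
  rw [Preadditive.comp_neg]
  refine neg_eq_zero.mpr ?_
  refine (Category.assoc _ _ _).symm.trans ?_
  refine (congrArg (· ≫ _) ((shiftFunctor C (-1 : ℤ)).map_comp g h).symm).trans ?_
  refine (congrArg (fun k => (shiftFunctor C (-1 : ℤ)).map k ≫ _) (zero₂₃ hT)).trans ?_
  exact (congrArg (· ≫ _) ((shiftFunctor C (-1 : ℤ)).map_zero _ _)).trans zero_comp

private lemma fibMor_comp_eq {X₁ Y₁ X₂ Y₂ Z : C} {f₁ : X₁ ⟶ Y₁} {g₁ : Y₁ ⟶ Z}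
    {h₁ : Z ⟶ X₁⟦(1 : ℤ)⟧} {f₂ : X₂ ⟶ Y₂} {g₂ : Y₂ ⟶ Z} {h₂ : Z ⟶ X₂⟦(1 : ℤ)⟧}
    (a : X₁ ⟶ X₂) (b : Y₁ ⟶ Y₂)
    (c₁ : f₁ ≫ b = a ≫ f₂) (c₂ : g₁ = b ≫ g₂) (c₃ : h₁ ≫ a⟦(1 : ℤ)⟧' = h₂) :
    fibMor f₁ g₁ h₁ ≫ a = fibMor f₂ g₂ h₂ := by
  let φ : Triangle.mk f₁ g₁ h₁ ⟶ Triangle.mk f₂ g₂ h₂ :=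
    Triangle.homMk _ _ a b (𝟙 Z) c₁ ((Category.comp_id _).trans c₂)
      (c₃.trans (Category.id_comp _).symm)
  have hc := ((invRotate C).map φ).comm₁
  dsimp [φ] at hc
  exact hc.trans ((congrArg (· ≫ _) ((shiftFunctor C (-1 : ℤ)).map_id Z)).trans
    (Category.id_comp _))

end FibHelpers

section DKeyLemma

/-- **Dual KEY lemma** (fiber of a glued map): given a two-step fiber tower on `A` and
a compatibly glued extension `D`, there is a map `κ : A ⟶ D` whose fiber is the
second-stage fiber `z₁`. -/
private lemma dkey_lemma {z₂ A a₂ z₁ m₁ D : C}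
    (f₂ : z₂ ⟶ A) (σ₂ : A ⟶ a₂) (h₂' : a₂ ⟶ z₂⟦(1 : ℤ)⟧)
    (hT₁ : Triangle.mk f₂ σ₂ h₂' ∈ distTriang C)
    (fz : z₁ ⟶ z₂) (σ₁ : z₂ ⟶ m₁) (hz : m₁ ⟶ z₁⟦(1 : ℤ)⟧)
    (hT₂ : Triangle.mk fz σ₁ hz ∈ distTriang C)
    (j₂ : m₁ ⟶ D) (t₂ : D ⟶ a₂)
    (hT₃ : Triangle.mk j₂ t₂ (h₂' ≫ σ₁⟦(1 : ℤ)⟧') ∈ distTriang C)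
    (hVza : ∀ f : z₁ ⟶ a₂⟦(-1 : ℤ)⟧, f = 0)
    (hVzm : ∀ f : z₁ ⟶ m₁⟦(-1 : ℤ)⟧, f = 0)
    (hVzD : ∀ f : z₁⟦(1 : ℤ)⟧ ⟶ D, f = 0)
    (hVz₂D : ∀ f : z₂⟦(1 : ℤ)⟧ ⟶ D, f = 0) :
    ∃ (κ : A ⟶ D) (h' : D ⟶ z₁⟦(1 : ℤ)⟧),
      f₂ ≫ κ = σ₁ ≫ j₂ ∧ κ ≫ t₂ = σ₂ ∧
      Triangle.mk (fz ≫ f₂) κ h' ∈ distTriang C := by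
  -- construct κ
  obtain ⟨κ, hκ₁, hκ₂⟩ := cdt₂ hT₁ hT₃ σ₁ (𝟙 a₂) (by rw [Category.id_comp])
  rw [Category.comp_id] at hκ₂
  -- hκ₁ : f₂ ≫ κ = σ₁ ≫ j₂,  hκ₂ : σ₂ = κ ≫ t₂
  obtain ⟨Fκ, kκ, hks, hR⟩ := distinguished_cocone_triangle₁ κ
  have hkκ : kκ ≫ κ = 0 := zero₁₂ hR
  -- θ : z₁ ⟶ Fκ
  obtain ⟨θ, hθ⟩ := coyon₂ hR (fz ≫ f₂) (by
    rw [Category.assoc, hκ₁, ← Category.assoc, zero₁₂ hT₂, zero_comp])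
  -- ŷ : Fκ ⟶ z₂
  obtain ⟨yh, hyh⟩ := coyon₂ hT₁ kκ (by rw [hκ₂, ← Category.assoc, hkκ, zero_comp])
  -- ζ : Fκ ⟶ a₂⟦-1⟧
  obtain ⟨ζ, hζ⟩ := coyon_fib hT₃ (yh ≫ σ₁) (by
    rw [Category.assoc, ← hκ₁, ← Category.assoc, ← hyh, hkκ])
  -- glue identity
  have hglue : fibMor f₂ σ₂ h₂' ≫ σ₁ = fibMor j₂ t₂ (h₂' ≫ σ₁⟦(1 : ℤ)⟧') :=
    fibMor_comp_eq σ₁ κ hκ₁ hκ₂ rfl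
  -- corrected ŷ'
  set yh' : Fκ ⟶ z₂ := yh - ζ ≫ fibMor f₂ σ₂ h₂' with hyh'def
  have hyh'₁ : yh' ≫ f₂ = kκ := by
    rw [hyh'def, Preadditive.sub_comp, ← hyh, Category.assoc, fibMor_comp hT₁,
      comp_zero, sub_zero]
  have hyh'₂ : yh' ≫ σ₁ = 0 := by
    rw [hyh'def, Preadditive.sub_comp, hζ, Category.assoc, hglue, sub_self]
  -- ϑ : Fκ ⟶ z₁
  obtain ⟨ϑ, hϑ⟩ := coyon₂ hT₂ yh' hyh'₂
  -- θ ≫ ϑ = 𝟙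
  have hθϑ : θ ≫ ϑ = 𝟙 z₁ := by
    have s1 : θ ≫ yh = fz := by
      have h5 : (θ ≫ yh - fz) ≫ f₂ = 0 := by
        rw [Preadditive.sub_comp, Category.assoc, ← hyh, ← hθ, sub_self]
      exact sub_eq_zero.mp (killmor₁ hT₁ _ h5 hVza)
    have s2 : θ ≫ yh' = fz := by
      rw [hyh'def, Preadditive.comp_sub, s1, ← Category.assoc, hVza (θ ≫ ζ), zero_comp,
        sub_zero]
    have h6 : (θ ≫ ϑ - 𝟙 z₁) ≫ fz = 0 := by
      rw [Preadditive.sub_comp, Category.id_comp, Category.assoc, ← hϑ, s2, sub_self]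
    exact sub_eq_zero.mp (killmor₁ hT₂ _ h6 hVzm)
  -- ϑ ≫ θ = 𝟙
  have hϑθ : ϑ ≫ θ = 𝟙 Fκ := by
    obtain ⟨ζ₆, hζ₆⟩ := coyon_fib hR (ϑ ≫ θ - 𝟙 Fκ) (by
      rw [Preadditive.sub_comp, Category.id_comp, Category.assoc, ← hθ, ← Category.assoc,
        ← hϑ, hyh'₁, sub_self])
    -- the D-level endomorphism
    set υ₀ : D ⟶ D :=
      (shiftFunctor C (-1 : ℤ)).preimage (fibMor kκ κ hks ≫ ζ₆) with hυ₀def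
    have hκυ : κ ≫ υ₀ = 0 := by
      apply (shiftFunctor C (-1 : ℤ)).map_injective
      rw [Functor.map_comp, hυ₀def, Functor.map_preimage, Functor.map_zero,
        ← Category.assoc, comp_fibMor_zero hR, zero_comp]
    have hυ₀ : υ₀ = 0 := by
      have d1 : j₂ ≫ υ₀ = 0 := by
        apply killyon₃ hT₂ _ ?_ hVzD
        rw [← Category.assoc, ← hκ₁, Category.assoc, hκυ, comp_zero]
      obtain ⟨υ₂, hυ₂⟩ := yon₂ hT₃ υ₀ d1
      have d2 : σ₂ ≫ υ₂ = 0 := by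
        rw [hκ₂, Category.assoc, ← hυ₂, hκυ]
      have d3 : υ₂ = 0 := killyon₃ hT₁ _ d2 hVz₂D
      rw [hυ₂, d3, comp_zero]
    have hsq0 : (ϑ ≫ θ - 𝟙 Fκ) ≫ (ϑ ≫ θ - 𝟙 Fκ) = 0 := by
      rw [hζ₆, Category.assoc, ← Category.assoc (fibMor kκ κ hks) ζ₆ _]
      have : fibMor kκ κ hks ≫ ζ₆ = (shiftFunctor C (-1 : ℤ)).map υ₀ := by
        rw [hυ₀def, Functor.map_preimage]
      rw [this, hυ₀, Functor.map_zero, zero_comp, comp_zero]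
    have hsq : (ϑ ≫ θ - 𝟙 Fκ) ≫ (ϑ ≫ θ - 𝟙 Fκ) = -(ϑ ≫ θ - 𝟙 Fκ) := by
      have haa : (ϑ ≫ θ) ≫ (ϑ ≫ θ) = ϑ ≫ θ := by
        rw [show (ϑ ≫ θ) ≫ ϑ ≫ θ = ϑ ≫ (θ ≫ ϑ) ≫ θ by simp only [Category.assoc], hθϑ,
          Category.id_comp]
      simp only [Preadditive.sub_comp, Preadditive.comp_sub, Category.comp_id,
        Category.id_comp, haa]
      abel
    rw [hsq0] at hsq
    exact sub_eq_zero.mp (neg_eq_zero.mp hsq.symm)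
  -- transport the triangle along θ
  have hIsoθ : IsIso θ := ⟨ϑ, hθϑ, hϑθ⟩
  have hiso : Triangle.mk (fz ≫ f₂) κ (hks ≫ ϑ⟦(1 : ℤ)⟧') ≅ Triangle.mk kκ κ hks := by
    refine Triangle.isoMk _ _ (@asIso _ _ _ _ θ hIsoθ) (Iso.refl A) (Iso.refl D) ?_
      ((Category.comp_id _).trans (Category.id_comp _).symm) ?_
    · exact (Category.comp_id _).trans hθ
    · exact (Category.assoc _ _ _).trans ((congrArg (hks ≫ ·)
        (((shiftFunctor C (1 : ℤ)).map_comp ϑ θ).symm.trans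
        ((congrArg (shiftFunctor C (1 : ℤ)).map hϑθ).trans
        ((shiftFunctor C (1 : ℤ)).map_id Fκ)))).trans
        ((Category.comp_id hks).trans (Category.id_comp hks).symm))
  exact ⟨κ, hks ≫ ϑ⟦(1 : ℤ)⟧', hκ₁, hκ₂.symm, isomorphic_distinguished _ hR _ hiso⟩

end DKeyLemma

section MainInduction

variable {S : Set C}

/-- The factorisation data for a morphism `α`. -/
private def FD (S : Set C) {a0 c : C} (α : a0 ⟶ c) : Prop :=
  ∃ (z a : C) (_ : ExtClos S z) (_ : ExtClos S a) (f : z ⟶ a0) (σ : a0 ⟶ a) (ι : a ⟶ c)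
    (h : a ⟶ z⟦(1 : ℤ)⟧), (Triangle.mk f σ h ∈ distTriang C) ∧ σ ≫ ι = α ∧
      ∀ b, ExtClos S b → ∀ u v : b ⟶ a, u ≫ ι = v ≫ ι → u = v

private lemma zfact {a0 c : C} (h0 : ExtClos S a0) {α : a0 ⟶ c} (hα : α = 0) :
    FD S α := by
  refine ⟨a0, 0, h0, ExtClos.zero (isZero_zero C), 𝟙 a0, 0, 0, 0,
    contractible_distinguished a0, by simp [hα], ?_⟩
  intro b hb u v _
  exact (isZero_zero C).eq_of_tgt u v

/-- Extension step for the fibre-of-a-nonzero-map-to-a-simple lemma. -/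
private lemma simple_fiber_ext (hS : IsOrthogonalCollection 2 S) {s : C} (hs : s ∈ S)
    {a' a'' a0 : C} (ha' : ExtClos S a') (hb'' : ExtClos S a'')
    (fa : a' ⟶ a0) (ga : a0 ⟶ a'') (hconn : a'' ⟶ a'⟦(1 : ℤ)⟧)
    (hA : Triangle.mk fa ga hconn ∈ distTriang C)
    (iha : ∀ β : a' ⟶ s, β ≠ 0 →
      ∃ (F : C) (_ : ExtClos S F) (f : F ⟶ a') (h : s ⟶ F⟦(1 : ℤ)⟧),
        Triangle.mk f β h ∈ distTriang C)
    (ihb : ∀ β : a'' ⟶ s, β ≠ 0 →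
      ∃ (F : C) (_ : ExtClos S F) (f : F ⟶ a'') (h : s ⟶ F⟦(1 : ℤ)⟧),
        Triangle.mk f β h ∈ distTriang C)
    (α : a0 ⟶ s) (hα : α ≠ 0) :
    ∃ (F : C) (_ : ExtClos S F) (f : F ⟶ a0) (h : s ⟶ F⟦(1 : ℤ)⟧),
      Triangle.mk f α h ∈ distTriang C := by
  have h0 : ExtClos S a0 := ExtClos.ext fa ga ⟨hconn, hA⟩ ha' hb''
  obtain ⟨Fα, kα, hαs, TFα⟩ := distinguished_cocone_triangle₁ α
  by_cases hβ : fa ≫ α = 0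
  · -- case (i) : α factors through a''
    obtain ⟨ab, hab⟩ := yon₂ hA α hβ
    have hab0 : ab ≠ 0 := fun hh => hα (by rw [hab, hh, comp_zero])
    obtain ⟨F'', hF'', kF₂, h'', T''⟩ := ihb ab hab0
    obtain ⟨Fe, jF, tF, TFe⟩ := distinguished_cocone_triangle₂ (kF₂ ≫ hconn)
    have hFe : ExtClos S Fe := ExtClos.ext jF tF ⟨_, TFe⟩ ha' hF''
    obtain ⟨mm, hm₁, hm₂⟩ := cdt₂ TFe hA (𝟙 a') kF₂
      (by rw [CategoryTheory.Functor.map_id, Category.comp_id])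
    rw [Category.id_comp] at hm₁
    obtain ⟨θ, hθ⟩ := coyon₂ TFα mm (by
      rw [hab, ← Category.assoc, ← hm₂, Category.assoc, zero₁₂ T'', comp_zero])
    obtain ⟨yα, hyα⟩ := coyon₂ T'' (kα ≫ ga) (by
      rw [Category.assoc, ← hab, zero₁₂ TFα])
    obtain ⟨ϑ₀, hϑ₀⟩ := coyon₃ TFe yα (by
      rw [← Category.assoc, ← hyα, Category.assoc, zero₂₃ hA, comp_zero])
    obtain ⟨wh, hwh⟩ := coyon₂ hA (ϑ₀ ≫ mm - kα) (by
      rw [Preadditive.sub_comp, Category.assoc, ← hm₂, ← Category.assoc, ← hϑ₀, ← hyα,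
        sub_self])
    set ϑ : Fα ⟶ Fe := ϑ₀ - wh ≫ jF with hϑdef
    have hϑt : ϑ ≫ tF = yα := by
      rw [hϑdef, Preadditive.sub_comp, ← hϑ₀, Category.assoc, zero₁₂ TFe, comp_zero,
        sub_zero]
    have hϑm : ϑ ≫ mm = kα := by
      have h7 : ϑ₀ ≫ mm = wh ≫ fa + kα := by
        rw [← hwh]; abel
      rw [hϑdef, Preadditive.sub_comp, Category.assoc, hm₁, h7]
      abel
    -- θ ≫ ϑ = 𝟙
    have s1 : θ ≫ yα = tF := by
      have h5 : (θ ≫ yα - tF) ≫ kF₂ = 0 := by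
        rw [Preadditive.sub_comp, Category.assoc, ← hyα, ← Category.assoc, ← hθ, ← hm₂,
          sub_self]
      exact sub_eq_zero.mp (killmor₁ T'' _ h5 (van hS Fe hFe s (ExtClos.of hs)))
    have hθϑ : θ ≫ ϑ = 𝟙 Fe := by
      have h6 : (θ ≫ ϑ - 𝟙 Fe) ≫ tF = 0 := by
        rw [Preadditive.sub_comp, Category.id_comp, Category.assoc, hϑt, s1, sub_self]
      obtain ⟨ξ, hξ⟩ := coyon₂ TFe (θ ≫ ϑ - 𝟙 Fe) h6
      have h8 : ξ ≫ fa = 0 := by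
        rw [← hm₁, ← Category.assoc, ← hξ, Preadditive.sub_comp, Category.id_comp,
          Category.assoc, hϑm, ← hθ, sub_self]
      have hξ0 : ξ = 0 := killmor₁ hA ξ h8 (van hS Fe hFe a'' hb'')
      have h9 : θ ≫ ϑ - 𝟙 Fe = 0 := by rw [hξ, hξ0, zero_comp]
      exact sub_eq_zero.mp h9
    -- ϑ ≫ θ = 𝟙 via the skew-field property
    obtain ⟨ζ₃, hζ₃⟩ := coyon_fib TFα (ϑ ≫ θ - 𝟙 Fα) (by
      rw [Preadditive.sub_comp, Category.id_comp, Category.assoc, ← hθ, hϑm, sub_self])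
    set es : s⟦(-1 : ℤ)⟧ ⟶ s⟦(-1 : ℤ)⟧ := fibMor kα α hαs ≫ ζ₃ with hesdef
    set es₁ : s ⟶ s := (shiftFunctor C (-1 : ℤ)).preimage es with hes₁def
    by_cases hes : es₁ = 0
    · have hes0 : es = 0 := by
        have hmp := (shiftFunctor C (-1 : ℤ)).map_preimage es
        rw [← hmp, ← hes₁def, hes, Functor.map_zero]
      have hsq0 : (ϑ ≫ θ - 𝟙 Fα) ≫ (ϑ ≫ θ - 𝟙 Fα) = 0 := by
        rw [hζ₃, Category.assoc, ← Category.assoc (fibMor kα α hαs) ζ₃ _, ← hesdef, hes0,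
          zero_comp, comp_zero]
      have hsq : (ϑ ≫ θ - 𝟙 Fα) ≫ (ϑ ≫ θ - 𝟙 Fα) = -(ϑ ≫ θ - 𝟙 Fα) := by
        have haa : (ϑ ≫ θ) ≫ (ϑ ≫ θ) = ϑ ≫ θ := by
          rw [show (ϑ ≫ θ) ≫ ϑ ≫ θ = ϑ ≫ (θ ≫ ϑ) ≫ θ by simp only [Category.assoc], hθϑ,
            Category.id_comp]
        simp only [Preadditive.sub_comp, Preadditive.comp_sub, Category.comp_id,
          Category.id_comp, haa]
        abel
      rw [hsq0] at hsq
      have hϑθ : ϑ ≫ θ = 𝟙 Fα := sub_eq_zero.mp (neg_eq_zero.mp hsq.symm)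
      have : IsIso θ := ⟨ϑ, hθϑ, hϑθ⟩
      exact ⟨Fα, ExtClos.iso (asIso θ) hFe, kα, hαs, TFα⟩
    · exfalso
      have hI₁ : IsIso es₁ := hS.isIso_of_ne_zero s hs es₁ hes
      have hI : IsIso es := by
        have : IsIso ((shiftFunctor C (-1 : ℤ)).map es₁) := inferInstance
        rwa [hes₁def, (shiftFunctor C (-1 : ℤ)).map_preimage es] at this
      have hsplit : fibMor kα α hαs ≫ (ζ₃ ≫ inv es) = 𝟙 _ := by
        rw [← Category.assoc, ← hesdef]
        exact IsIso.hom_inv_id es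
      have hzero : (shiftFunctor C (-1 : ℤ)).map α ≫ fibMor kα α hαs = 0 :=
        comp_fibMor_zero TFα
      have hα0 : (shiftFunctor C (-1 : ℤ)).map α = 0 := by
        rw [← Category.comp_id ((shiftFunctor C (-1 : ℤ)).map α), ← hsplit,
          ← Category.assoc, hzero, zero_comp]
      exact hα ((shiftFunctor C (-1 : ℤ)).map_injective
        (by rw [hα0, Functor.map_zero]))
  · -- case (ii) : the restriction of α to a' is nonzero ; use the KEY lemma
    obtain ⟨F', hF', fF, hF, TF'⟩ := iha (fa ≫ α) hβ
    set cu : s ⟶ (s⟦(-1 : ℤ)⟧)⟦(1 : ℤ)⟧ :=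
      (shiftEquiv C (1 : ℤ)).counitIso.inv.app s with hcudef
    have hTmK : Triangle.mk (fibMor kα α hαs) kα (α ≫ cu) ∈ distTriang C :=
      inv_rot_of_distTriang _ TFα
    have hTeK : Triangle.mk (fibMor fF (fa ≫ α) hF) fF (fa ≫ (α ≫ cu)) ∈ distTriang C := by
      rw [← Category.assoc]
      exact inv_rot_of_distTriang _ TF'
    have hH3 : ∀ g : (s⟦(-1 : ℤ)⟧)⟦(1 : ℤ)⟧ ⟶ a'',
        fa ≫ (α ≫ cu) ≫ g = 0 → (α ≫ cu) ≫ g = 0 := by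
      intro g hg
      have hg' : (fa ≫ α) ≫ cu ≫ g = 0 := by
        simpa only [Category.assoc] using hg
      obtain ⟨w₂, hw₂⟩ := yon₃ TF' (cu ≫ g) hg'
      rw [shift_kill (van hS F' hF' a'' hb'') w₂, comp_zero] at hw₂
      rw [Category.assoc, hw₂, comp_zero]
    obtain ⟨ιK, h', hsq1, hsq2, TK⟩ := key_lemma
      (fibMor kα α hαs) kα (α ≫ cu) hTmK
      fa ga hconn hA
      (fibMor fF (fa ≫ α) hF) fF hTeK
      (van hS F' hF' a0 h0) (van hS F' hF' a'' hb'')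
      (shift_kill (van hS a' ha' a'' hb'')) hH3
    exact ⟨Fα, ExtClos.ext ιK (kα ≫ ga) ⟨h', TK⟩ hF' hb'', kα, hαs, TFα⟩

end MainInduction

section TopInduction

variable {S : Set C}

/-- A nonzero map from an object of `⟨S⟩` to a simple `s ∈ S` has fibre in `⟨S⟩`. -/
private lemma simple_fiber (hS : IsOrthogonalCollection 2 S) {s : C} (hs : s ∈ S) :
    ∀ a0, ExtClos S a0 → ∀ α : a0 ⟶ s, α ≠ 0 →
      ∃ (F : C) (_ : ExtClos S F) (f : F ⟶ a0) (h : s ⟶ F⟦(1 : ℤ)⟧),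
        Triangle.mk f α h ∈ distTriang C := by
  intro a0 h0
  induction h0 with
  | of hts =>
      rename_i t
      intro α hα
      by_cases hts' : t = s
      · subst hts'
        have : IsIso α := hS.isIso_of_ne_zero t hts α hα
        have hiso : Triangle.mk (0 : (0 : C) ⟶ t) (𝟙 t) 0 ≅ Triangle.mk (0 : (0 : C) ⟶ t) α 0 :=
          Triangle.isoMk _ _ (Iso.refl _) (Iso.refl _) (@asIso _ _ _ _ α this)
            ((Category.comp_id _).trans (Category.id_comp _).symm) rfl
            (zero_comp.trans comp_zero.symm)
        refine ⟨0, ExtClos.zero (isZero_zero C), 0, 0, ?_⟩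
        exact isomorphic_distinguished _ (contractible_distinguished₁ t) _ hiso.symm
      · exact absurd (hS.hom_eq_zero t hts s hs hts' α) hα
  | zero hz => exact fun α hα => absurd (hz.eq_of_src α 0) hα
  | sum hx hy ihx ihy =>
      rename_i x y
      intro α hα
      exact simple_fiber_ext hS hs hx hy biprod.inl biprod.snd 0
        (binaryBiproductTriangle_distinguished x y) ihx ihy α hα
  | iso e hx ih =>
      intro α hα
      have hα' : e.hom ≫ α ≠ 0 := fun hh => hα (by
        rw [← Category.id_comp α, ← e.inv_hom_id, Category.assoc, hh, comp_zero])
      obtain ⟨F, hF, f, h, tri⟩ := ih (e.hom ≫ α) hα'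
      have hiso : Triangle.mk f (e.hom ≫ α) h ≅ Triangle.mk (f ≫ e.hom) α h :=
        Triangle.isoMk _ _ (Iso.refl _) e (Iso.refl _) (Category.id_comp _).symm
          (Category.comp_id _) (((congrArg (h ≫ ·) ((shiftFunctor C (1 : ℤ)).map_id _)).trans
            (Category.comp_id h)).trans (Category.id_comp h).symm)
      exact ⟨F, hF, f ≫ e.hom, h, isomorphic_distinguished _ tri _ hiso.symm⟩
  | ext fa ga hT ha hb iha ihb =>
      intro α hα
      obtain ⟨hconn, hA⟩ := hT
      exact simple_fiber_ext hS hs ha hb fa ga hconn hA iha ihb α hα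

/-- Extension step for the main induction. -/
private lemma ext_step (hS : IsOrthogonalCollection 2 S) {b' b'' c : C}
    (hb' : ExtClos S b') (hb'' : ExtClos S b'') (g₁ : b' ⟶ c) (g₂ : c ⟶ b'')
    (hb : b'' ⟶ b'⟦(1 : ℤ)⟧) (hB : Triangle.mk g₁ g₂ hb ∈ distTriang C)
    (IH' : ∀ a0, ExtClos S a0 → ∀ α : a0 ⟶ b', FD S α)
    (IH'' : ∀ a0, ExtClos S a0 → ∀ α : a0 ⟶ b'', FD S α) :
    ∀ a0, ExtClos S a0 → ∀ α : a0 ⟶ c, FD S α := by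
  intro a0 h0 α
  have hcE : ExtClos S c := ExtClos.ext g₁ g₂ ⟨hb, hB⟩ hb' hb''
  obtain ⟨z₂, a₂, hz₂, ha₂, f₂, σ₂, ι₂, h₂', T₁d, fact₂, mono₂⟩ := IH'' a0 h0 (α ≫ g₂)
  obtain ⟨β', hβ'⟩ := coyon₂ hB (f₂ ≫ α) (by
    rw [Category.assoc, ← fact₂, ← Category.assoc, zero₁₂ T₁d, zero_comp])
  obtain ⟨z₁, m₁, hz₁, hm₁, fz, σ₁, ι₁, hzz, T₂d, fact₁, mono₁⟩ := IH' z₂ hz₂ β'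
  obtain ⟨D, j₂, t₂, T₃d⟩ := distinguished_cocone_triangle₂ (h₂' ≫ σ₁⟦(1 : ℤ)⟧')
  have hD : ExtClos S D := ExtClos.ext j₂ t₂ ⟨_, T₃d⟩ hm₁ ha₂
  obtain ⟨κ, h', hκ₁, hκ₂, Tout⟩ := dkey_lemma f₂ σ₂ h₂' T₁d fz σ₁ hzz T₂d j₂ t₂ T₃d
    (van hS z₁ hz₁ a₂ ha₂) (van hS z₁ hz₁ m₁ hm₁)
    (shift_kill (van hS z₁ hz₁ D hD)) (shift_kill (van hS z₂ hz₂ D hD))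
  obtain ⟨ι, hι⟩ := yon₂ Tout α (by
    rw [Category.assoc, hβ', ← fact₁]
    simp only [← Category.assoc]
    rw [zero₁₂ T₂d]
    simp)
  have h8a : j₂ ≫ ι = ι₁ ≫ g₁ := by
    have e1 : σ₁ ≫ j₂ ≫ ι = f₂ ≫ α := by
      rw [← Category.assoc, ← hκ₁, Category.assoc, ← hι]
    have e2 : σ₁ ≫ ι₁ ≫ g₁ = f₂ ≫ α := by
      rw [← Category.assoc, fact₁, ← hβ']
    have d0 : σ₁ ≫ (j₂ ≫ ι - ι₁ ≫ g₁) = 0 := by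
      rw [Preadditive.comp_sub, e1, e2, sub_self]
    exact sub_eq_zero.mp (killyon₃ T₂d _ d0 (shift_kill (van hS z₁ hz₁ c hcE)))
  have h8b : ι ≫ g₂ = t₂ ≫ ι₂ := by
    have d0 : κ ≫ (ι ≫ g₂ - t₂ ≫ ι₂) = 0 := by
      rw [Preadditive.comp_sub, ← Category.assoc, ← hι, ← Category.assoc κ t₂ ι₂, hκ₂,
        fact₂, sub_self]
    exact sub_eq_zero.mp (killyon₃ Tout _ d0 (shift_kill (van hS z₁ hz₁ b'' hb'')))
  refine ⟨z₁, D, hz₁, hD, fz ≫ f₂, κ, ι, h', Tout, hι.symm, ?_⟩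
  intro b hbE u v huv
  have hd : (u - v) ≫ ι = 0 := by rw [Preadditive.sub_comp, huv, sub_self]
  have h1 : ((u - v) ≫ t₂) ≫ ι₂ = 0 := by
    rw [Category.assoc, ← h8b, ← Category.assoc, hd, zero_comp]
  have h2 : (u - v) ≫ t₂ = 0 := mono₂ b hbE ((u - v) ≫ t₂) 0 (by rw [h1, zero_comp])
  obtain ⟨ub, hub⟩ := coyon₂ T₃d (u - v) h2
  have h3 : (ub ≫ ι₁) ≫ g₁ = 0 := by
    rw [Category.assoc, ← h8a, ← Category.assoc, ← hub, hd]
  have h4 : ub ≫ ι₁ = 0 := killmor₁ hB _ h3 (van hS b hbE b'' hb'')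
  have h5 : ub = 0 := mono₁ b hbE ub 0 (by rw [h4, zero_comp])
  have h6 : u - v = 0 := by rw [hub, h5, zero_comp]
  exact sub_eq_zero.mp h6

private lemma main_induction (hS : IsOrthogonalCollection 2 S) :
    ∀ c, ExtClos S c → ∀ a0, ExtClos S a0 → ∀ α : a0 ⟶ c, FD S α := by
  intro c hc
  induction hc with
  | of hs =>
      intro a0 h0 α
      by_cases hα : α = 0
      · exact zfact h0 hα
      · obtain ⟨F, hF, f, h, tri⟩ := simple_fiber hS hs a0 h0 α hα
        exact ⟨F, _, hF, ExtClos.of hs, f, α, 𝟙 _, h, tri, Category.comp_id α,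
          fun b hb u v huv => by simpa using huv⟩
  | zero hz => exact fun a0 h0 α => zfact h0 (hz.eq_of_tgt α 0)
  | iso e hx ih =>
      intro a0 h0 α
      obtain ⟨z, a, hz, ha, f, σ, ι₀, h, tri, fact, mono⟩ := ih a0 h0 (α ≫ e.inv)
      refine ⟨z, a, hz, ha, f, σ, ι₀ ≫ e.hom, h, tri, ?_, ?_⟩
      · rw [← Category.assoc, fact, Category.assoc, e.inv_hom_id, Category.comp_id]
      · intro b hb u v huv
        apply mono b hb
        have h' : (u ≫ ι₀) ≫ e.hom = (v ≫ ι₀) ≫ e.hom := by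
          simpa only [Category.assoc] using huv
        exact (cancel_mono e.hom).mp h'
  | sum hx hy ihx ihy =>
      rename_i x y
      exact ext_step hS hx hy biprod.inl biprod.snd 0
        (binaryBiproductTriangle_distinguished x y) ihx ihy
  | ext f g hT ha hb iha ihb =>
      obtain ⟨h, hd⟩ := hT
      exact ext_step hS ha hb f g h hd iha ihb

end TopInduction


/-- Let `S` be a `2`-orthogonal collection in `C`.  Every morphism
`α : a⁰ ⟶ a¹` in `⟨S⟩` factorises as `a⁰ ⟶ a ⟶ a¹` in `⟨S⟩` where the first map is a
deflation and the second is a categorical monomorphism in `⟨S⟩`. -/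
theorem statement9 {k : Type} [Field k] [Linear k C]
    [EssentiallySmall.{v} C] [IsIdempotentComplete C]
    [∀ x y : C, FiniteDimensional k (x ⟶ y)]
    (S : Set C) (hS : IsOrthogonalCollection 2 S)
    {a0 a1 : C} (h0 : ExtClos S a0) (h1 : ExtClos S a1) (α : a0 ⟶ a1) :
    ∃ (a : C) (_ : ExtClos S a) (σ : a0 ⟶ a) (ι : a ⟶ a1),
      σ ≫ ι = α ∧
      -- `σ` is a deflation: the second map of a short triangle in `⟨S⟩`
      (∃ (x : C) (_ : ExtClos S x) (f : x ⟶ a0), ShortTri f σ) ∧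
      -- `ι` is a categorical monomorphism in `⟨S⟩`
      (∀ b : C, ExtClos S b → Function.Injective (fun u : b ⟶ a => u ≫ ι)) := by
  obtain ⟨z, a, hz, ha, f, σ, ι, h, tri, fact, mono⟩ := main_induction hS a1 h1 a0 h0 α
  exact ⟨a, ha, σ, ι, fact, ⟨z, hz, f, h, tri⟩,
    fun b hb u v huv => mono b hb u v huv⟩
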